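/- Let q ≡ 2 (mod 3) be a prime power, let C₀ ≤ F_{q³}* be the subgroup of order q² + q + 1, let L₀ = {h ∈ F_{q³}* : Tr_{q³/q}(h) = 0, N_{q³/q}(h) = 1}, and let R = {λ + h^{q²} − h^q : λ ∈ F_q, h ∈ L₀}. Then R is a complete set of coset representatives of F_q* in (F_{q³}* \ F_q*): the map (λ, h) ↦ λ + h^{q²} − h^q is injective on F_q × L₀, no element of R lies in F_q*, and every coset of F_q* in F_{q³}* other than F_q* itself contains exactly one element of R. -/

import Mathlib

/-- `h` belongs to the set `L₀ = {h ∈ F_{q³}* : Tr(h) = 0, N(h) = 1}`. -/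
def memL0 (q : ℕ) {K : Type} [Field K] (h : K) : Prop :=
  h ≠ 0 ∧ h + h ^ q + h ^ q ^ 2 = 0 ∧ h ^ (1 + q + q ^ 2) = 1

/-- `r` belongs to the set `R = {λ + h^{q²} − h^q : λ ∈ F_q, h ∈ L₀}`,
where `F_q` is identified with the fixed field of the `q`-power map. -/
def memR (q : ℕ) {K : Type} [Field K] (r : K) : Prop :=
  ∃ l h : K, l ^ q = l ∧ memL0 q h ∧ r = l + h ^ q ^ 2 - h ^ q

theorem R_coset_representatives (q : ℕ) (hq : q % 3 = 2)
    (K : Type) [Field K] [Fintype K] (hK : Fintype.card K = q ^ 3) :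
    (∀ l₁ h₁ l₂ h₂ : K, l₁ ^ q = l₁ → l₂ ^ q = l₂ →
        memL0 q h₁ → memL0 q h₂ →
        l₁ + h₁ ^ q ^ 2 - h₁ ^ q = l₂ + h₂ ^ q ^ 2 - h₂ ^ q →
        l₁ = l₂ ∧ h₁ = h₂) ∧
      (∀ r : K, memR q r → ¬ (r ≠ 0 ∧ r ^ q = r)) ∧
      (∀ z : K, z ≠ 0 → z ^ q ≠ z →
        ∃! r : K, memR q r ∧ ∃ y : K, y ≠ 0 ∧ y ^ q = y ∧ r = z * y) := by
  have hq2 : 2 ≤ q := by omega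
  set p := ringChar K with hpdef
  have hcharp : CharP K p := ringChar.charP K
  have hppr : p.Prime := CharP.char_is_prime K p
  haveI : Fact p.Prime := ⟨hppr⟩
  obtain ⟨n, hnpr, hcard⟩ := FiniteField.card K p
  have hq3 : q ^ 3 = p ^ (n : ℕ) := by rw [← hK, hcard]
  have hqdvd : q ∣ p ^ (n : ℕ) := by rw [← hq3]; exact dvd_pow_self q (by norm_num)
  obtain ⟨m, hmle, hm⟩ := (Nat.dvd_prime_pow hppr).mp hqdvd
  -- Frobenius x ↦ x^q as a ring hom
  let φ : K →+* K := iterateFrobenius K p m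
  have hφ : ∀ x : K, φ x = x ^ q := by
    intro x; rw [show φ x = x ^ p ^ m from iterateFrobenius_def p m x, hm]
  have hφ3 : ∀ x : K, φ (φ (φ x)) = x := by
    intro x
    have h1 : x ^ Fintype.card K = x := FiniteField.pow_card x
    rw [hφ, hφ, hφ, ← pow_mul, ← pow_mul]
    rw [hK] at h1
    rw [show q * (q * q) = q ^ 3 by ring]
    exact h1
  -- characteristic is not 3
  have hp3 : p ≠ 3 := by
    intro h
    rcases Nat.eq_zero_or_pos m with h0 | h1
    · subst h0; simp at hm; omega
    · have : 3 ∣ q := by rw [hm, h]; exact dvd_pow_self 3 (by omega)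
      omega
  have h3 : (3 : K) ≠ 0 := by
    intro h
    have hd := (CharP.cast_eq_zero_iff K p 3).mp (by exact_mod_cast h)
    exact hp3 ((Nat.prime_dvd_prime_iff_eq hppr (by norm_num)).mp hd)
  have h9 : (9 : K) ≠ 0 := by
    have h99 : (9 : K) = 3 * 3 := by norm_num
    rw [h99]; exact mul_ne_zero h3 h3
  have hsq : ∀ x : K, x ^ q ^ 2 = φ (φ x) := by
    intro x; rw [hφ, hφ, ← pow_mul, show q * q = q ^ 2 from (pow_two q).symm]
  have hnorm : ∀ x : K, x ^ (1 + q + q ^ 2) = x * φ x * φ (φ x) := by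
    intro x; rw [pow_add, pow_add, pow_one, hsq x, ← hφ x]
  -- the key linear-algebra lemma: u + 2 u^q = 0 ⟹ u = 0
  have key : ∀ u : K, u + 2 * φ u = 0 → u = 0 := by
    intro u hu
    have e1 := congrArg φ hu
    simp only [map_add, map_mul, map_ofNat, map_zero] at e1
    have e2 := congrArg φ e1
    simp only [map_add, map_mul, map_ofNat, map_zero, hφ3] at e2
    have h9u : (9 : K) * u = 0 := by linear_combination hu - 2 * e1 + 4 * e2
    exact (mul_eq_zero.mp h9u).resolve_left h9
  -- elements of F_q* have x^(2q-1) = x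
  have hfixpow : ∀ x : K, x ≠ 0 → φ x = x → x ^ (2 * q - 1) = x := by
    intro x hx0 hfx
    rw [hφ] at hfx
    have h1 : x ^ (2 * q) = x * x := by
      rw [mul_comm 2 q, pow_mul, hfx, pow_two]
    have h2 : x ^ (2 * q - 1) * x = x ^ (2 * q) := by
      rw [← pow_succ]; congr 1; omega
    exact mul_right_cancel₀ hx0 (by rw [h2, h1])
  obtain ⟨e, he⟩ : ∃ e, 2 * q - 1 = 3 * e := ⟨(2 * q - 1) / 3, by omega⟩
  -- the main computation
  have main : ∀ d l₁ h₁ l₂ h₂ : K, d ≠ 0 → φ d = d → φ l₁ = l₁ → φ l₂ = l₂ →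
      h₁ ≠ 0 → h₁ + φ h₁ + φ (φ h₁) = 0 → h₁ * φ h₁ * φ (φ h₁) = 1 →
      h₂ ≠ 0 → h₂ + φ h₂ + φ (φ h₂) = 0 → h₂ * φ h₂ * φ (φ h₂) = 1 →
      l₁ + φ (φ h₁) - φ h₁ = d * (l₂ + φ (φ h₂) - φ h₂) →
      d = 1 ∧ l₁ = l₂ ∧ h₁ = h₂ := by
    intro d l₁ h₁ l₂ h₂ hd0 fd fl₁ fl₂ h₁0 t₁ n₁ h₂0 t₂ n₂ M
    have e1 := congrArg φ M
    simp only [map_add, map_sub, map_mul, fd, fl₁, fl₂, hφ3] at e1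
    have e2 := congrArg φ e1
    simp only [map_add, map_sub, map_mul, fd, fl₁, fl₂, hφ3] at e2
    have hl : l₁ = d * l₂ :=
      mul_left_cancel₀ h3 (by linear_combination M + e1 + e2)
    have hu : (h₁ - d * h₂) + 2 * φ (h₁ - d * h₂) = 0 := by
      simp only [map_sub, map_mul, fd]
      linear_combination t₁ - d * t₂ - M + hl
    have hh : h₁ = d * h₂ := sub_eq_zero.mp (key _ hu)
    have fdh : φ h₁ = d * φ h₂ := by rw [hh, map_mul, fd]
    have fdh2 : φ (φ h₁) = d * φ (φ h₂) := by rw [fdh, map_mul, fd]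
    have hd3 : d ^ 3 = 1 := by
      rw [fdh2, fdh, hh] at n₁
      linear_combination n₁ - d ^ 3 * n₂
    have hd1 : d = 1 := by
      have hA : d ^ (2 * q - 1) = d := hfixpow d hd0 fd
      rw [he, pow_mul, hd3, one_pow] at hA
      exact hA.symm
    subst hd1
    rw [one_mul] at hl hh
    exact ⟨rfl, hl, hh⟩
  refine ⟨?_, ?_, ?_⟩
  · -- injectivity
    rintro l₁ h₁ l₂ h₂ hl₁ hl₂ ⟨h₁0, h₁t, h₁n⟩ ⟨h₂0, h₂t, h₂n⟩ eqn
    rw [hsq h₁, hsq h₂, ← hφ h₁, ← hφ h₂] at eqn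
    rw [hsq h₁, ← hφ h₁] at h₁t
    rw [hsq h₂, ← hφ h₂] at h₂t
    rw [hnorm] at h₁n h₂n
    have fl₁ : φ l₁ = l₁ := by rw [hφ]; exact hl₁
    have fl₂ : φ l₂ = l₂ := by rw [hφ]; exact hl₂
    obtain ⟨-, hl, hh⟩ := main 1 l₁ h₁ l₂ h₂ one_ne_zero (map_one φ) fl₁ fl₂
      h₁0 h₁t h₁n h₂0 h₂t h₂n (by rw [one_mul]; exact eqn)
    exact ⟨hl, hh⟩
  · -- avoids F_q*
    rintro r ⟨l, h, hl, ⟨h0, ht, hn⟩, rfl⟩ ⟨hr0, hrq⟩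
    rw [hsq h, ← hφ h] at ht
    have fl : φ l = l := by rw [hφ]; exact hl
    have eqn : φ (l + h ^ q ^ 2 - h ^ q) = l + h ^ q ^ 2 - h ^ q := by
      rw [hφ]; exact hrq
    rw [hsq h, ← hφ h] at eqn
    simp only [map_add, map_sub, fl, hφ3] at eqn
    have h3h : (3 : K) * φ (φ h) = 0 := by linear_combination ht - eqn
    have hφφ : φ (φ h) = 0 := (mul_eq_zero.mp h3h).resolve_left h3
    apply h0
    rw [← hφ3 h, hφφ, map_zero]
  · -- existence and uniqueness of the coset representative
    intro z hz0 hzq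
    have fz : φ z ≠ z := by rw [hφ]; exact hzq
    set t := z + φ z + φ (φ z) with hts
    have ft : φ t = t := by
      rw [hts]; simp only [map_add, hφ3]; ring
    set lam := t / 3 with hlam
    have flam : φ lam = lam := by rw [hlam, map_div₀, ft, map_ofNat]
    have h3lam : (3 : K) * lam = t := by
      rw [hlam]; field_simp
    set w := z - lam with hwdef
    have hwt : w + φ w + φ (φ w) = 0 := by
      simp only [hwdef, map_sub, flam]
      linear_combination hts - h3lam
    have hw0 : w ≠ 0 := by
      intro h0
      apply fz
      have hzlam : z = lam := by rw [hwdef] at h0; exact sub_eq_zero.mp h0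
      rw [hzlam, flam]
    set h₀ : K := (-w + 2 * φ w - 4 * φ (φ w)) / 9 with hh₀def
    have fh₀q : φ h₀ = (-φ w + 2 * φ (φ w) - 4 * w) / 9 := by
      rw [hh₀def]
      simp only [map_div₀, map_sub, map_add, map_neg, map_mul, map_ofNat, hφ3]
    have fh₀q2 : φ (φ h₀) = (-φ (φ w) + 2 * w - 4 * φ w) / 9 := by
      rw [fh₀q]
      simp only [map_div₀, map_sub, map_add, map_neg, map_mul, map_ofNat, hφ3]
    have h₀tr : h₀ + φ h₀ + φ (φ h₀) = 0 := by
      rw [fh₀q2, fh₀q, hh₀def, ← add_div, ← add_div,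
        div_eq_zero_iff]
      left; linear_combination -3 * hwt
    have hg : φ (φ h₀) - φ h₀ = w := by
      rw [fh₀q2, fh₀q, div_sub_div_same, div_eq_iff h9]
      linear_combination -3 * hwt
    have hh₀0 : h₀ ≠ 0 := by
      intro h0
      apply hw0
      rw [← hg, h0, map_zero, map_zero, sub_zero]
    set N : K := h₀ * φ h₀ * φ (φ h₀) with hNdef
    have hN0 : N ≠ 0 := by
      rw [hNdef]
      exact mul_ne_zero (mul_ne_zero hh₀0 ((map_ne_zero φ).mpr hh₀0))
        ((map_ne_zero φ).mpr ((map_ne_zero φ).mpr hh₀0))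
    have fN : φ N = N := by
      rw [hNdef]; simp only [map_mul, hφ3]; ring
    set c : K := (N⁻¹) ^ e with hcdef
    have fc : φ c = c := by rw [hcdef]; simp only [map_pow, map_inv₀, fN]
    have hc0 : c ≠ 0 := pow_ne_zero _ (inv_ne_zero hN0)
    have hc3 : c ^ 3 * N = 1 := by
      have hcN : c ^ 3 = N⁻¹ := by
        rw [hcdef, ← pow_mul, show e * 3 = 2 * q - 1 by omega]
        exact hfixpow N⁻¹ (inv_ne_zero hN0) (by rw [map_inv₀, fN])
      rw [hcN, inv_mul_cancel₀ hN0]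
    set l : K := c * lam with hldef
    set h : K := c * h₀ with hhdef
    have fl : φ l = l := by rw [hldef, map_mul, fc, flam]
    have fh : φ h = c * φ h₀ := by rw [hhdef, map_mul, fc]
    have fh2 : φ (φ h) = c * φ (φ h₀) := by rw [fh, map_mul, fc]
    have hh0 : h ≠ 0 := mul_ne_zero hc0 hh₀0
    have hht : h + φ h + φ (φ h) = 0 := by
      rw [fh2, fh, hhdef]; linear_combination c * h₀tr
    have hhn : h * φ h * φ (φ h) = 1 := by
      rw [fh2, fh, hhdef]
      linear_combination hc3 - c ^ 3 * hNdef
    have hform : z * c = l + φ (φ h) - φ h := by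
      rw [fh2, fh, hldef]
      linear_combination -c * hg - c * hwdef
    refine ⟨z * c, ⟨⟨l, h, by rw [← hφ]; exact fl,
      ⟨hh0, by rw [hsq h, ← hφ h]; exact hht, by rw [hnorm]; exact hhn⟩,
      by rw [hsq h, ← hφ h]; exact hform⟩,
      c, hc0, by rw [← hφ]; exact fc, rfl⟩, ?_⟩
    rintro r' ⟨⟨l', h', hl', ⟨h'0, h't, h'n⟩, hr'⟩, y', hy'0, hy'q, hr'y⟩
    rw [hsq h', ← hφ h'] at h't hr'
    rw [hnorm] at h'n
    have fl' : φ l' = l' := by rw [hφ]; exact hl'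
    have fy' : φ y' = y' := by rw [hφ]; exact hy'q
    have fd : φ (y' * c⁻¹) = y' * c⁻¹ := by
      rw [map_mul, map_inv₀, fc, fy']
    have hd0 : y' * c⁻¹ ≠ 0 := mul_ne_zero hy'0 (inv_ne_zero hc0)
    have hM : l' + φ (φ h') - φ h' = (y' * c⁻¹) * (l + φ (φ h) - φ h) := by
      rw [← hform, ← hr', hr'y]
      field_simp
    obtain ⟨hd1, -, -⟩ := main (y' * c⁻¹) l' h' l h hd0 fd fl' fl
      h'0 h't h'n hh0 hht hhn hM
    have hy'c : y' = c := by
      exact (mul_inv_eq_one₀ hc0).mp hd1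
    rw [hr'y, hy'c]
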